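/- If K is a Kakeya set in F_q^n and m is a positive integer, then |K| ≥ N_q(n,m) / C(m+n-1, n). -/

import Mathlib

open scoped Classical

open MvPolynomial Polynomial

variable {F : Type} [Field F] {n : ℕ}

noncomputable def linSub (x : Fin n → F) : MvPolynomial (Fin n) F →ₐ[F] Polynomial F :=
  MvPolynomial.aeval (fun i => Polynomial.C (x i) * Polynomial.X)

lemma linSub_coeff (x : Fin n → F) (R : MvPolynomial (Fin n) F) (j : ℕ) :
    (linSub x R).coeff j = MvPolynomial.eval x (homogeneousComponent j R) := by
  conv_lhs => rw [R.as_sum]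
  rw [homogeneousComponent_apply, map_sum, MvPolynomial.eval_sum, Polynomial.finset_sum_coeff]
  rw [Finset.sum_filter]
  apply Finset.sum_congr rfl
  intro c hc
  rw [linSub, MvPolynomial.aeval_monomial]
  have hprod : (c.prod fun i k => (Polynomial.C (x i) * Polynomial.X) ^ k)
      = Polynomial.C (c.prod fun i k => (x i) ^ k) * Polynomial.X ^ (c.sum fun _ k => k) := by
    rw [Finsupp.prod, Finsupp.prod, Finsupp.sum]
    rw [map_prod, ← Finset.prod_pow_eq_pow_sum, ← Finset.prod_mul_distrib]
    exact Finset.prod_congr rfl fun i _ => by rw [mul_pow, map_pow]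
  rw [hprod]
  simp only [Polynomial.algebraMap_eq, ← Polynomial.C_mul, Polynomial.coeff_C_mul, Polynomial.coeff_X_pow]
  have hdeg : c.degree = c.sum fun _ k => k := rfl
  rw [MvPolynomial.eval_monomial, Finsupp.prod_pow]
  by_cases h : (c.sum fun _ k => k) = j
  · simp [hdeg, h]
  · simp [hdeg, h, Ne.symm h]

noncomputable def affSub (x y : Fin n → F) : MvPolynomial (Fin n) F →ₐ[F] Polynomial F :=
  MvPolynomial.aeval (fun i => Polynomial.C (x i) * Polynomial.X + Polynomial.C (y i))

noncomputable def tauShift (k : Fin n → F) : MvPolynomial (Fin n) F →ₐ[F] MvPolynomial (Fin n) F :=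
  MvPolynomial.aeval (fun i => MvPolynomial.X i + MvPolynomial.C (k i))

lemma affSub_natDegree_le (x y : Fin n → F) (P : MvPolynomial (Fin n) F) :
    (affSub x y P).natDegree ≤ P.totalDegree := by
  conv_lhs => rw [P.as_sum]
  rw [map_sum]
  apply Polynomial.natDegree_sum_le_of_forall_le
  intro c hc
  rw [affSub, MvPolynomial.aeval_monomial]
  refine le_trans (Polynomial.natDegree_mul_le) ?_
  rw [Polynomial.algebraMap_eq, Polynomial.natDegree_C, zero_add]
  refine le_trans ?_ (MvPolynomial.le_totalDegree hc)
  rw [Finsupp.prod, Finsupp.sum]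
  refine le_trans (Polynomial.natDegree_prod_le _ _) (Finset.sum_le_sum fun i _ => ?_)
  refine le_trans (Polynomial.natDegree_pow_le) ?_
  have h1 : (Polynomial.C (x i) * Polynomial.X + Polynomial.C (y i)).natDegree ≤ 1 := by
    refine le_trans (Polynomial.natDegree_add_le _ _) ?_
    simp [Polynomial.natDegree_C_mul_le _ _ |>.trans Polynomial.natDegree_X_le]
  calc c i * (Polynomial.C (x i) * Polynomial.X + Polynomial.C (y i)).natDegree
      ≤ c i * 1 := Nat.mul_le_mul_left _ h1
    _ = c i := mul_one _

lemma affSub_eq_linSub_tauShift (x k : Fin n → F) (P : MvPolynomial (Fin n) F) :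
    affSub x k P = linSub x (tauShift k P) := by
  have : affSub x k = (linSub x).comp (tauShift k) := by
    rw [tauShift, MvPolynomial.comp_aeval]
    apply MvPolynomial.algHom_ext
    intro i
    simp [linSub, affSub]
  rw [this]; rfl

lemma taylor_affSub (x y : Fin n → F) (t0 : F) (P : MvPolynomial (Fin n) F) :
    Polynomial.taylor t0 (affSub x y P)
      = affSub x (fun i => x i * t0 + y i) P := by
  rw [Polynomial.taylor_apply, Polynomial.comp_eq_aeval]
  have : (Polynomial.aeval (R := F) (Polynomial.X + Polynomial.C t0)).comp (affSub x y)
      = affSub x (fun i => x i * t0 + y i) := by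
    rw [affSub, MvPolynomial.comp_aeval]
    apply MvPolynomial.algHom_ext
    intro i
    simp only [affSub, MvPolynomial.aeval_X, map_add, map_mul, Polynomial.aeval_C,
      Polynomial.aeval_X, Polynomial.algebraMap_eq, Polynomial.C_mul, Polynomial.C_add]
    ring
  calc Polynomial.aeval (R := F) (Polynomial.X + Polynomial.C t0) (affSub x y P)
      = ((Polynomial.aeval (R := F) (Polynomial.X + Polynomial.C t0)).comp (affSub x y)) P := rfl
    _ = affSub x (fun i => x i * t0 + y i) P := by rw [this]


lemma binom_aux (a : Fin n) (ka : F) (b : ℕ) (hb : b ≠ 0) :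
    ∃ s : MvPolynomial (Fin n) F, (MvPolynomial.X a + MvPolynomial.C ka) ^ b
      = MvPolynomial.X a ^ b + s ∧ s.totalDegree < b := by
  refine ⟨∑ j ∈ Finset.range b, MvPolynomial.X a ^ j * MvPolynomial.C ka ^ (b - j)
      * MvPolynomial.C (Nat.choose b j : F), ?_, ?_⟩
  · rw [add_pow]
    rw [Finset.sum_range_succ]
    simp [Nat.choose_self, add_comm]
  · refine lt_of_le_of_lt (MvPolynomial.totalDegree_finset_sum _ _) ?_
    rw [Finset.sup_lt_iff (by positivity)]
    intro j hj
    rw [Finset.mem_range] at hj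
    calc (MvPolynomial.X a ^ j * MvPolynomial.C ka ^ (b - j) * MvPolynomial.C (Nat.choose b j : F)).totalDegree
        ≤ (MvPolynomial.X a ^ j * MvPolynomial.C ka ^ (b - j)).totalDegree
          + (MvPolynomial.C (Nat.choose b j : F) : MvPolynomial (Fin n) F).totalDegree :=
          MvPolynomial.totalDegree_mul _ _
      _ ≤ ((MvPolynomial.X a ^ j : MvPolynomial (Fin n) F).totalDegree
          + (MvPolynomial.C ka ^ (b - j) : MvPolynomial (Fin n) F).totalDegree) + 0 := by
          gcongr
          · exact MvPolynomial.totalDegree_mul _ _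
          · exact le_of_eq (MvPolynomial.totalDegree_C _)
      _ ≤ (j + ((b:ℕ) - b)) + 0 := by
          gcongr
          · exact (MvPolynomial.totalDegree_X_pow _ _).le
          · calc (MvPolynomial.C ka ^ (b - j) : MvPolynomial (Fin n) F).totalDegree
                ≤ (b-j) * (MvPolynomial.C ka : MvPolynomial (Fin n) F).totalDegree :=
                  MvPolynomial.totalDegree_pow _ _
              _ = 0 := by rw [MvPolynomial.totalDegree_C, mul_zero]
              _ ≤ b - b := Nat.zero_le _
      _ < b := by omega

lemma tauShift_monomial (k : Fin n → F) (e : Fin n →₀ ℕ) :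
    ∃ r : MvPolynomial (Fin n) F, tauShift k (MvPolynomial.monomial e 1)
      = MvPolynomial.monomial e 1 + r
      ∧ (r = 0 ∨ r.totalDegree < e.sum fun _ x => x) := by
  induction e using Finsupp.induction with
  | zero => exact ⟨0, by simp [tauShift], Or.inl rfl⟩
  | single_add a b e ha hb ih =>
    obtain ⟨r, hr, hrd⟩ := ih
    obtain ⟨s, hs, hsd⟩ := binom_aux a (k a) b hb
    have hsum : ((Finsupp.single a b + e).sum fun _ x => x) = b + (e.sum fun _ x => x) := by
      rw [Finsupp.sum_add_index' (fun _ => rfl) (fun _ _ _ => rfl), Finsupp.sum_single_index rfl]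
    have hmono : (MvPolynomial.monomial (Finsupp.single a b + e) (1:F))
        = MvPolynomial.monomial (Finsupp.single a b) 1 * MvPolynomial.monomial e 1 := by
      rw [MvPolynomial.monomial_mul, one_mul]
    have htau1 : tauShift k (MvPolynomial.monomial (Finsupp.single a b) (1:F))
        = (MvPolynomial.X a + MvPolynomial.C (k a)) ^ b := by
      rw [tauShift, MvPolynomial.aeval_monomial]
      rw [Finsupp.prod_single_index]
      · simp
      · exact pow_zero _
    refine ⟨MvPolynomial.X a ^ b * r + s * MvPolynomial.monomial e 1 + s * r, ?_, Or.inr ?_⟩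
    · rw [hmono, map_mul, htau1, hr, hs, ← MvPolynomial.X_pow_eq_monomial]
      ring
    · have hb1 : 0 < b := Nat.pos_of_ne_zero hb
      have hM : (MvPolynomial.monomial e (1:F)).totalDegree = e.sum fun _ x => x :=
        MvPolynomial.totalDegree_monomial _ one_ne_zero
      rw [hsum]
      have hXb : (MvPolynomial.X a ^ b : MvPolynomial (Fin n) F).totalDegree = b :=
        MvPolynomial.totalDegree_X_pow _ _
      have h1 : (MvPolynomial.X a ^ b * r).totalDegree < b + (e.sum fun _ x => x) := by
        rcases hrd with h | h
        · simp only [h, mul_zero, MvPolynomial.totalDegree_zero]; omega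
        · refine lt_of_le_of_lt (MvPolynomial.totalDegree_mul _ _) ?_
          rw [hXb]; omega
      have h2 : (s * MvPolynomial.monomial e (1:F)).totalDegree < b + (e.sum fun _ x => x) := by
        refine lt_of_le_of_lt (MvPolynomial.totalDegree_mul _ _) ?_
        rw [hM]; omega
      have h3 : (s * r).totalDegree < b + (e.sum fun _ x => x) := by
        rcases hrd with h | h
        · simp only [h, mul_zero, MvPolynomial.totalDegree_zero]; omega
        · refine lt_of_le_of_lt (MvPolynomial.totalDegree_mul _ _) ?_; omega
      exact lt_of_le_of_lt (MvPolynomial.totalDegree_add _ _)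
        (max_lt (lt_of_le_of_lt (MvPolynomial.totalDegree_add _ _) (max_lt h1 h2)) h3)

lemma hc_tauShift (k : Fin n → F) (P : MvPolynomial (Fin n) F) :
    homogeneousComponent P.totalDegree (tauShift k P)
      = homogeneousComponent P.totalDegree P := by
  choose r hr hrd using tauShift_monomial (F := F) (n := n) k
  have hterm : ∀ e ∈ P.support, tauShift k (MvPolynomial.monomial e (MvPolynomial.coeff e P))
      = MvPolynomial.monomial e (MvPolynomial.coeff e P)
        + MvPolynomial.C (MvPolynomial.coeff e P) * r e := by
    intro e _
    have hmon : MvPolynomial.monomial e (MvPolynomial.coeff e P)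
        = MvPolynomial.C (MvPolynomial.coeff e P) * MvPolynomial.monomial e 1 := by
      rw [MvPolynomial.C_mul_monomial, mul_one]
    have hC : tauShift k (MvPolynomial.C (MvPolynomial.coeff e P))
        = MvPolynomial.C (MvPolynomial.coeff e P) := by
      rw [tauShift]; simp
    rw [hmon, map_mul, hr e, hC, mul_add]
  have expand : tauShift k P = P + ∑ e ∈ P.support, MvPolynomial.C (MvPolynomial.coeff e P) * r e := by
    conv_lhs => rw [P.as_sum]
    rw [map_sum, Finset.sum_congr rfl hterm, Finset.sum_add_distrib, ← P.as_sum]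
  rw [expand, map_add, map_sum, Finset.sum_eq_zero, add_zero]
  intro e he
  rcases hrd e with h | h
  · simp [h]
  · apply MvPolynomial.homogeneousComponent_eq_zero
    refine lt_of_le_of_lt ?_ (lt_of_lt_of_le h (MvPolynomial.le_totalDegree he))
    refine le_trans (MvPolynomial.totalDegree_mul _ _) ?_
    simp [MvPolynomial.totalDegree_C]

lemma kakeya_key {K : Finset (Fin n → F)} [Fintype F]
    (hK : ∀ x : Fin n → F, ∃ y : Fin n → F, ∀ t : F, t • x + y ∈ K)
    {m : ℕ} (P : MvPolynomial (Fin n) F) (hP : P ≠ 0)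
    (hdeg : ∀ c ∈ P.support, ∀ i, c i ≤ Fintype.card F - 1)
    (htot : P.totalDegree < m * Fintype.card F)
    (hvan : ∀ k ∈ K, ∀ c : Fin n →₀ ℕ, (c.sum fun _ x => x) < m →
      MvPolynomial.coeff c (tauShift k P) = 0) : False := by
  classical
  set d := P.totalDegree with hd
  set G := homogeneousComponent d P with hGdef
  have hG : G ≠ 0 := by
    obtain ⟨c, hc, hceq⟩ := P.support.exists_mem_eq_sup
      (Finset.nonempty_iff_ne_empty.mpr (fun h => hP (MvPolynomial.support_eq_empty.mp h))) (fun s => s.sum fun _ e => e)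
    intro h0
    have : MvPolynomial.coeff c G = MvPolynomial.coeff c P := by
      rw [hGdef, MvPolynomial.coeff_homogeneousComponent, if_pos]
      show (c.sum fun _ e => e) = d
      rw [hd, MvPolynomial.totalDegree, hceq]
    rw [h0, MvPolynomial.coeff_zero] at this
    exact MvPolynomial.mem_support_iff.mp hc this.symm
  have hGvan : ∀ x : Fin n → F, MvPolynomial.eval x G = 0 := by
    intro x
    obtain ⟨y, hy⟩ := hK x
    set Q := affSub x y P with hQdef
    have hQdeg : Q.natDegree ≤ d := affSub_natDegree_le x y P
    have hQ0 : Q = 0 := by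
      by_contra hne
      have hroots : ∀ t0 : F, m ≤ Q.rootMultiplicity t0 := by
        intro t0
        rw [Polynomial.le_rootMultiplicity_iff hne]
        have hXdvd : Polynomial.X ^ m ∣ Polynomial.taylor t0 Q := by
          rw [Polynomial.X_pow_dvd_iff]
          intro j hj
          rw [hQdef, taylor_affSub, affSub_eq_linSub_tauShift, linSub_coeff]
          have hk : (fun i => x i * t0 + y i) ∈ K := by
            have : (fun i => x i * t0 + y i) = t0 • x + y := by
              funext i
              simp [mul_comm]
            rw [this]; exact hy t0
          have hzero : homogeneousComponent j (tauShift (fun i => x i * t0 + y i) P) = 0 := by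
            apply MvPolynomial.ext
            intro c
            rw [MvPolynomial.coeff_homogeneousComponent, MvPolynomial.coeff_zero]
            split
            · next h => exact hvan _ hk c (by rw [show (c.sum fun _ x => x) = c.degree from rfl, h]; exact hj)
            · rfl
          rw [hzero, map_zero]
        obtain ⟨B, hB⟩ := hXdvd
        have hQr : Q = Polynomial.taylor (-t0) (Polynomial.taylor t0 Q) := by
          rw [Polynomial.taylor_taylor, neg_add_cancel, Polynomial.taylor_zero']
          rfl
        rw [hQr, hB, Polynomial.taylor_mul]
        refine Dvd.dvd.mul_right ?_ _
        have : Polynomial.taylor (-t0) ((Polynomial.X : Polynomial F) ^ m)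
            = (Polynomial.X - Polynomial.C t0) ^ m := by
          rw [show ((Polynomial.X : Polynomial F) ^ m) = Polynomial.monomial m 1 from by
              rw [Polynomial.monomial_one_right_eq_X_pow],
            Polynomial.taylor_monomial, Polynomial.C_1, one_mul, map_neg, sub_eq_add_neg]
        rw [this]
      have hcard : Fintype.card F * m ≤ Multiset.card Q.roots := by
        calc Fintype.card F * m = ∑ _t0 : F, m := by
              rw [Finset.sum_const, Finset.card_univ, smul_eq_mul]
          _ ≤ ∑ t0 : F, Q.roots.count t0 := Finset.sum_le_sum fun t0 _ => by
              rw [Polynomial.count_roots]; exact hroots t0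
          _ = ∑ t0 ∈ Q.roots.toFinset, Q.roots.count t0 := by
              refine (Finset.sum_subset (Finset.subset_univ _) fun a _ ha => ?_).symm
              exact Multiset.count_eq_zero.mpr (fun h => ha (Multiset.mem_toFinset.mpr h))
          _ = Multiset.card Q.roots := Multiset.toFinset_sum_count_eq _
      have h2 : Multiset.card Q.roots ≤ d := le_trans (Polynomial.card_roots' Q) hQdeg
      have : m * Fintype.card F ≤ d := by
        rw [mul_comm]; exact le_trans hcard h2
      omega
    have hcoe : Q.coeff d = MvPolynomial.eval x G := by
      rw [hQdef, affSub_eq_linSub_tauShift, linSub_coeff, hGdef, hd, hc_tauShift]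
    rw [hQ0, Polynomial.coeff_zero] at hcoe
    exact hcoe.symm
  apply hG
  apply MvPolynomial.eq_zero_of_eval_eq_zero (Fin n) F G hGvan
  rw [MvPolynomial.mem_restrictDegree]
  intro s hs i
  have hsP : s ∈ P.support := by
    rw [MvPolynomial.mem_support_iff] at hs ⊢
    intro h0
    apply hs
    rw [hGdef, MvPolynomial.coeff_homogeneousComponent]
    split <;> simp [h0]
  exact hdeg s hsP i


lemma count_bound (n m : ℕ) (hm : 0 < m) :
    (Finset.univ.filter (fun c : Fin n → Fin m => (∑ i, (c i : ℕ)) < m)).card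
      ≤ (m + n - 1).choose n := by
  classical
  set D := Finset.univ.filter (fun c : Fin n → Fin m => (∑ i, (c i : ℕ)) < m) with hD
  have key : ∀ c : ↥D, (∑ i, ((c : Fin n → Fin m) i : ℕ)) ≤ m - 1 := by
    rintro ⟨c, hc⟩
    have h2 := (Finset.mem_filter.mp hc).2
    show (∑ i, ((c i : ℕ))) ≤ m - 1
    omega
  let g : ↥D → Multiset (Fin (n + 1)) := fun c =>
    (∑ i : Fin n, Multiset.replicate ((c : Fin n → Fin m) i : ℕ) (Fin.castSucc i))
      + Multiset.replicate (m - 1 - ∑ i, ((c : Fin n → Fin m) i : ℕ)) (Fin.last n)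
  have hcardsum : ∀ c : ↥D,
      Multiset.card (∑ i : Fin n, Multiset.replicate ((c : Fin n → Fin m) i : ℕ) (Fin.castSucc i))
        = ∑ i, ((c : Fin n → Fin m) i : ℕ) := by
    intro c
    rw [Multiset.card_sum]
    simp
  have hgcard : ∀ c : ↥D, Multiset.card (g c) = m - 1 := by
    intro c
    simp only [g, Multiset.card_add, Multiset.card_replicate, hcardsum]
    have := key c
    omega
  let f : ↥D → Sym (Fin (n + 1)) (m - 1) := fun c => ⟨g c, hgcard c⟩
  have hcount : ∀ (c : ↥D) (i : Fin n),
      Multiset.count (Fin.castSucc i) (g c) = ((c : Fin n → Fin m) i : ℕ) := by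
    intro c i
    simp only [g, Multiset.count_add, Multiset.count_sum', Multiset.count_replicate]
    rw [if_neg ((Fin.castSucc_lt_last i).ne')]
    rw [Finset.sum_eq_single i]
    · simp
    · intro b _ hb
      rw [if_neg (fun h => hb (Fin.castSucc_injective n h))]
    · intro h; exact absurd (Finset.mem_univ i) h
  have hinj : Function.Injective f := by
    intro c c' h
    have hg : g c = g c' := Subtype.ext_iff.mp h
    have : ∀ i : Fin n, ((c : Fin n → Fin m) i : ℕ) = ((c' : Fin n → Fin m) i : ℕ) := by
      intro i
      rw [← hcount c i, ← hcount c' i, hg]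
    ext i
    exact this i
  calc D.card = Fintype.card ↥D := (Fintype.card_coe D).symm
    _ ≤ Fintype.card (Sym (Fin (n + 1)) (m - 1)) := Fintype.card_le_of_injective f hinj
    _ = (Fintype.card (Fin (n+1)) + (m - 1) - 1).choose (m - 1) := Sym.card_sym_eq_choose _
    _ = (m + n - 1).choose (m - 1) := by rw [Fintype.card_fin]; congr 1; omega
    _ = (m + n - 1).choose n := by
        rw [← Nat.choose_symm (show n ≤ m + n - 1 by omega)]
        congr 1
        omega

/-- The Kakeya lower bound of Saraf–Sudan: `|K| ≥ N_q(n,m) / C(m+n-1,n)`. -/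
theorem stmt_4 (F : Type) [Field F] [Fintype F] (n : ℕ) (hn : 0 < n)
    (q : ℕ) (hq : q = Fintype.card F)
    (K : Finset (Fin n → F))
    (hK : ∀ x : Fin n → F, ∃ y : Fin n → F, ∀ t : F, t • x + y ∈ K)
    (m : ℕ) (hm : 0 < m) :
    ((Finset.univ.filter (fun e : Fin n → Fin q =>
        (∑ j, (e j : ℕ)) < m * q)).card : ℝ) / (Nat.choose (m + n - 1) n)
      ≤ K.card := by
  classical
  subst hq
  have hq2 : 1 < Fintype.card F := Fintype.one_lt_card
  set S := Finset.univ.filter (fun e : Fin n → Fin (Fintype.card F) =>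
      (∑ j, (e j : ℕ)) < m * Fintype.card F) with hS
  set Dm := Finset.univ.filter (fun c : Fin n → Fin m => (∑ i, (c i : ℕ)) < m) with hDm
  have main : S.card ≤ K.card * ((m + n - 1).choose n) := by
    by_contra hlt
    push_neg at hlt
    have hDle : Dm.card ≤ (m + n - 1).choose n := count_bound n m hm
    set toF : (Fin n → Fin (Fintype.card F)) → (Fin n →₀ ℕ) :=
      fun e => Finsupp.equivFunOnFinite.symm (fun i => (e i : ℕ)) with htoF
    have htoFinj : Function.Injective toF := by
      intro e e' h
      funext i
      have : ((e i : ℕ)) = ((e' i : ℕ)) := by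
        have := congrArg (fun f => f i) (congrArg Finsupp.equivFunOnFinite h)
        simpa [htoF] using this
      exact Fin.ext this
    set Pm : (↥S → F) → MvPolynomial (Fin n) F :=
      fun a => ∑ e : ↥S, MvPolynomial.monomial (toF e) (a e) with hPm
    set toFm : (Fin n → Fin m) → (Fin n →₀ ℕ) :=
      fun c => Finsupp.equivFunOnFinite.symm (fun i => (c i : ℕ)) with htoFm
    set L : (↥S → F) → (↥K × ↥Dm → F) :=
      fun a p => MvPolynomial.coeff (toFm p.2) (tauShift (p.1 : Fin n → F) (Pm a)) with hL
    have hPsub : ∀ a b, Pm (a - b) = Pm a - Pm b := by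
      intro a b
      rw [hPm, ← Finset.sum_sub_distrib]
      exact Finset.sum_congr rfl fun e _ => by
        rw [Pi.sub_apply, ← map_sub]
    have hLsub : ∀ a b, L (a - b) = L a - L b := by
      intro a b
      funext p
      simp only [hL, hPsub, map_sub, MvPolynomial.coeff_sub, Pi.sub_apply]
    have hnotinj : ¬ Function.Injective L := by
      intro hinj
      have hc := Fintype.card_le_of_injective L hinj
      rw [Fintype.card_fun, Fintype.card_fun, Fintype.card_prod, Fintype.card_coe,
        Fintype.card_coe, Fintype.card_coe] at hc
      have hSle : S.card ≤ K.card * Dm.card :=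
        (Nat.pow_le_pow_iff_right hq2).mp hc
      have : S.card ≤ K.card * ((m + n - 1).choose n) :=
        le_trans hSle (Nat.mul_le_mul_left _ hDle)
      omega
    rw [Function.not_injective_iff] at hnotinj
    obtain ⟨a, b, hab, hne⟩ := hnotinj
    set h := a - b with hh
    have hh0 : h ≠ 0 := sub_ne_zero.mpr hne
    have hLh : L h = 0 := by rw [hh, hLsub, hab, sub_self]
    have hPcoeff : ∀ e : ↥S, MvPolynomial.coeff (toF e) (Pm h) = h e := by
      intro e
      rw [hPm, MvPolynomial.coeff_sum]
      rw [Finset.sum_eq_single e]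
      · rw [MvPolynomial.coeff_monomial, if_pos rfl]
      · intro e' _ hne'
        rw [MvPolynomial.coeff_monomial, if_neg]
        exact fun hcontra => hne' (Subtype.ext (htoFinj hcontra))
      · intro hnot; exact absurd (Finset.mem_univ e) hnot
    have hPne : Pm h ≠ 0 := by
      obtain ⟨e, he⟩ := Function.ne_iff.mp hh0
      intro h0
      apply he
      rw [← hPcoeff e, h0, MvPolynomial.coeff_zero]
      rfl
    have hsupp : ∀ c ∈ (Pm h).support, ∃ e : ↥S, c = toF e := by
      intro c hcs
      by_contra hno
      push_neg at hno
      rw [MvPolynomial.mem_support_iff] at hcs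
      apply hcs
      rw [hPm, MvPolynomial.coeff_sum]
      apply Finset.sum_eq_zero
      intro e _
      rw [MvPolynomial.coeff_monomial, if_neg (fun hcontra => hno e hcontra.symm)]
    have hdeg : ∀ c ∈ (Pm h).support, ∀ i, c i ≤ Fintype.card F - 1 := by
      intro c hcs i
      obtain ⟨e, rfl⟩ := hsupp c hcs
      have : (toF e) i = ((e : Fin n → Fin (Fintype.card F)) i : ℕ) := rfl
      rw [this]
      have := ((e : Fin n → Fin (Fintype.card F)) i).isLt
      omega
    have hsum_toF : ∀ e : Fin n → Fin (Fintype.card F),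
        ((toF e).sum fun _ x => x) = ∑ j, (e j : ℕ) := by
      intro e
      rw [Finsupp.sum_fintype _ _ (fun i => rfl)]
      rfl
    have htot : (Pm h).totalDegree < m * Fintype.card F := by
      refine lt_of_le_of_lt (MvPolynomial.totalDegree_finset_sum _ _) ?_
      rw [Finset.sup_lt_iff (by positivity)]
      intro e _
      refine lt_of_le_of_lt (MvPolynomial.totalDegree_monomial_le _ _) ?_
      rw [show ((toF (e : Fin n → Fin (Fintype.card F))).sum fun _ => id)
          = ∑ j, ((e : Fin n → Fin (Fintype.card F)) j : ℕ) from hsum_toF _]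
      have := (Finset.mem_filter.mp e.2).2
      exact this
    have hvan : ∀ k ∈ K, ∀ c : Fin n →₀ ℕ, (c.sum fun _ x => x) < m →
        MvPolynomial.coeff c (tauShift k (Pm h)) = 0 := by
      intro k hk c hcm
      have hci : ∀ i, c i < m := by
        intro i
        refine lt_of_le_of_lt ?_ hcm
        by_cases hi : i ∈ c.support
        · exact Finset.single_le_sum (f := fun j => c j) (fun _ _ => Nat.zero_le _) hi
        · simp [Finsupp.notMem_support_iff.mp hi]
      set cD : Fin n → Fin m := fun i => ⟨c i, hci i⟩ with hcD
      have hcDmem : cD ∈ Dm := by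
        rw [hDm, Finset.mem_filter]
        refine ⟨Finset.mem_univ _, ?_⟩
        have : ∑ i, ((cD i : ℕ)) = c.sum fun _ x => x := by
          rw [Finsupp.sum_fintype _ _ (fun i => rfl)]
        rw [this]; exact hcm
      have hcoe : toFm cD = c := by
        ext i
        simp [htoFm, hcD]
      have := congrFun hLh (⟨k, hk⟩, ⟨cD, hcDmem⟩)
      rw [hL] at this
      simpa [hcoe] using this
    exact kakeya_key hK (Pm h) hPne hdeg htot hvan
  have hchoose : (0:ℝ) < ((m + n - 1).choose n : ℝ) := by
    exact_mod_cast Nat.choose_pos (show n ≤ m + n - 1 by omega)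
  rw [div_le_iff₀ hchoose]
  calc (S.card : ℝ) ≤ ((K.card * ((m + n - 1).choose n) : ℕ) : ℝ) := by exact_mod_cast main
    _ = (K.card : ℝ) * ((m + n - 1).choose n : ℝ) := by push_cast; ring
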